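/- arXiv:2112.07907 — 4 statements merged into one kernel-verified Lean document; each statement's English description precedes it below -/
import Mathlib

section
/- Let k_1, ..., k_n be non-negative integers and m = k_1 + ... + k_n. There exist families F_1, ..., F_n of convex sets in R^{n+m} with |F_i| = k_i + 2, satisfying the colorful intersection property, such that no F_i admits a k_i-transversal. Concretely, take a set X of 2n+m points in general position in R^{n+m}, partitioned as X = X_1 ∪ ... ∪ X_n with |X_i| = k_i + 2, and let F_i consist of the fibers π_i^{-1}(x) for x ∈ X_i, where π_i is the orthogonal projection onto the affine span of X_i. -/
/-- Optimality of the dimension in the main theorem: in `ℝ^{n+m}` there are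
families `F i` of `k i + 2` convex sets with the colorful intersection property
such that no `F i` admits a `k i`-transversal. -/
theorem stmt10 (n : ℕ) (hn : 1 ≤ n) (k : Fin n → ℕ) :
    ∃ F : (i : Fin n) → Fin (k i + 2) → Set (Fin (n + ∑ i, k i) → ℝ),
      (∀ i j, Convex ℝ (F i j)) ∧
      (∀ C : (i : Fin n) → Fin (k i + 2), (⋂ i, F i (C i)).Nonempty) ∧
      (∀ i : Fin n, ¬ ∃ γ : AffineSubspace ℝ (Fin (n + ∑ i, k i) → ℝ),
        Module.finrank ℝ γ.direction ≤ k i ∧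
        ∀ j, ((γ : Set (Fin (n + ∑ i, k i) → ℝ)) ∩ F i j).Nonempty) := by
  classical
  -- The coordinates split into blocks of size `k i + 1`.
  have hcard : Fintype.card (Σ i : Fin n, Fin (k i + 1)) = n + ∑ i, k i := by
    simp [Fintype.card_sigma, Finset.sum_add_distrib, Nat.add_comm]
  obtain e := Fintype.equivFinOfCardEq hcard
  -- model points in each block
  set v : (i : Fin n) → Fin (k i + 2) → Fin (k i + 1) → ℝ :=
    fun i j t => if (j : ℕ) = (t : ℕ) + 1 then 1 else 0 with hv
  refine ⟨fun i j => {x | ∀ t : Fin (k i + 1), x (e ⟨i, t⟩) = v i j t}, ?_, ?_, ?_⟩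
  · -- convexity
    intro i j x hx y hy a b _ _ hab
    intro t
    have hx' := hx t
    have hy' := hy t
    simp only [Pi.add_apply, Pi.smul_apply, smul_eq_mul] at *
    rw [hx', hy', ← add_mul, hab, one_mul]
  · -- colorful intersection
    intro C
    refine ⟨fun t => v (e.symm t).1 (C (e.symm t).1) (e.symm t).2, ?_⟩
    simp only [Set.mem_iInter]
    intro i t
    show v (e.symm (e ⟨i, t⟩)).1 (C (e.symm (e ⟨i, t⟩)).1) (e.symm (e ⟨i, t⟩)).2 = v i (C i) t
    rw [e.symm_apply_apply]
  · -- no k i transversal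
    rintro i ⟨γ, hrank, hmeet⟩
    choose x hxγ hxF using hmeet
    -- the difference vectors
    set u : Fin (k i + 1) → (Fin (n + ∑ i, k i) → ℝ) :=
      fun t => x t.succ - x 0 with hu
    have humem : ∀ t, u t ∈ γ.direction := by
      intro t
      have := AffineSubspace.vsub_mem_direction (hxγ t.succ) (hxγ 0)
      simpa [vsub_eq_sub] using this
    -- linear independence via projection to block coordinates
    have hind : LinearIndependent ℝ u := by
      set φ : (Fin (n + ∑ i, k i) → ℝ) →ₗ[ℝ] (Fin (k i + 1) → ℝ) :=
        { toFun := fun y => fun t => y (e ⟨i, t⟩)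
          map_add' := by intros; rfl
          map_smul' := by intros; rfl }
      have hφu : φ ∘ u = fun t => Pi.single t 1 := by
        funext t s
        have h1 := hxF t.succ s
        have h0 := hxF 0 s
        simp only [φ, hu, Function.comp_apply, LinearMap.coe_mk, AddHom.coe_mk,
          Pi.sub_apply, h1, h0, hv]
        by_cases h : t = s
        · subst h; simp [Fin.val_succ, Pi.single_apply]
        · have : (t : ℕ) + 1 ≠ (s : ℕ) + 1 := by
            intro hh; exact h (Fin.ext (by omega))
          simp [Fin.val_succ, this, Pi.single_apply, Ne.symm h, h]; exact fun hh => h (Fin.ext hh)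
      have hstd : LinearIndependent ℝ (fun t : Fin (k i + 1) => (Pi.single t 1 : Fin (k i + 1) → ℝ)) := by
        have := (Pi.basisFun ℝ (Fin (k i + 1))).linearIndependent
        have heq : ⇑(Pi.basisFun ℝ (Fin (k i + 1))) = fun t => (Pi.single t 1 : Fin (k i + 1) → ℝ) := by
          funext t
          simp [Pi.basisFun_apply, Pi.single]
        rwa [heq] at this
      have : LinearIndependent ℝ (φ ∘ u) := hφu ▸ hstd
      exact this.of_comp φ
    -- package into the direction submodule
    set w : Fin (k i + 1) → γ.direction := fun t => ⟨u t, humem t⟩ with hw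
    have hindw : LinearIndependent ℝ w := by
      have : u = (γ.direction.subtype) ∘ w := by funext t; rfl
      exact (this ▸ hind).of_comp γ.direction.subtype
    have hle := hindw.fintype_card_le_finrank
    simp only [Fintype.card_fin] at hle
    omega
end

section
/- Let F_1 = {A_1, A_2} and F_2 = {B_1, B_2} and F_3 = {C_1, C_2} be pairs of convex sets in R^2 such that A_i ∩ B_j ∩ C_k ≠ ∅ for all i, j, k ∈ {1,2}. Then A_1 ∩ A_2 ≠ ∅, or B_1 ∩ B_2 ≠ ∅, or C_1 ∩ C_2 ≠ ∅. -/
open Module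

set_option maxHeartbeats 1000000 in
private lemma sep_pair {E : Type*} [NormedAddCommGroup E] [NormedSpace ℝ E]
    (D : Fin 2 → Set E) (hD : ∀ i, Convex ℝ (D i))
    (hempty : D 0 ∩ D 1 = ∅)
    (q : Fin 2 → Fin 2 → Fin 2 → E) (hq : ∀ i j k, q i j k ∈ D i) :
    ∃ (f : E →L[ℝ] ℝ) (a : ℝ), ∀ j k, f (q 0 j k) < a ∧ a < f (q 1 j k) := by
  set S : Fin 2 → Set E := fun i => Set.range fun jk : Fin 2 × Fin 2 => q i jk.1 jk.2 with hS
  have hfin : ∀ i, (S i).Finite := fun i => Set.finite_range _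
  have hsub : ∀ i, convexHull ℝ (S i) ⊆ D i := by
    intro i
    apply convexHull_min _ (hD i)
    rintro x ⟨jk, rfl⟩
    exact hq i jk.1 jk.2
  have hdisj : Disjoint (convexHull ℝ (S 0)) (convexHull ℝ (S 1)) := by
    rw [Set.disjoint_iff_inter_eq_empty, ← Set.subset_empty_iff, ← hempty]
    exact Set.inter_subset_inter (hsub 0) (hsub 1)
  obtain ⟨f, u, v, hfu, huv, hfv⟩ := geometric_hahn_banach_compact_closed
    (convex_convexHull ℝ _) ((hfin 0).isCompact_convexHull (𝕜 := ℝ))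
    (convex_convexHull ℝ _) ((hfin 1).isClosed_convexHull (𝕜 := ℝ)) hdisj
  refine ⟨f, u, fun j k => ⟨hfu _ (subset_convexHull ℝ _ ⟨(j, k), rfl⟩), ?_⟩⟩
  exact huv.trans (hfv _ (subset_convexHull ℝ _ ⟨(j, k), rfl⟩))

set_option maxHeartbeats 1000000 in
/-- Three pairs of convex sets in the plane with the colorful intersection
property: some pair has intersecting members. -/
theorem stmt13 (A B C : Fin 2 → Set (Fin 2 → ℝ))
    (hA : ∀ i, Convex ℝ (A i)) (hB : ∀ i, Convex ℝ (B i)) (hC : ∀ i, Convex ℝ (C i))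
    (hcol : ∀ i j k : Fin 2, (A i ∩ B j ∩ C k).Nonempty) :
    (A 0 ∩ A 1).Nonempty ∨ (B 0 ∩ B 1).Nonempty ∨ (C 0 ∩ C 1).Nonempty := by
  by_contra hcon
  push_neg at hcon
  obtain ⟨hAe, hBe, hCe⟩ := hcon
  -- choose witness points
  have hp := fun i j k => (hcol i j k).choose_spec
  set p : Fin 2 → Fin 2 → Fin 2 → (Fin 2 → ℝ) := fun i j k => (hcol i j k).choose with hpdef
  have hpA : ∀ i j k, p i j k ∈ A i := fun i j k => (hp i j k).1.1
  have hpB : ∀ i j k, p i j k ∈ B j := fun i j k => (hp i j k).1.2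
  have hpC : ∀ i j k, p i j k ∈ C k := fun i j k => (hp i j k).2
  clear_value p
  clear hp hpdef
  obtain ⟨fA, aA, hfA⟩ := sep_pair A hA hAe p hpA
  obtain ⟨fB, aB, hfB⟩ := sep_pair B hB hBe
    (fun i j k => p j i k) (fun i j k => hpB j i k)
  obtain ⟨fC, aC, hfC⟩ := sep_pair C hC hCe
    (fun i j k => p j k i) (fun i j k => hpC j k i)

  -- the three functionals are linearly dependent
  have hdep : ¬ LinearIndependent ℝ ![fA.toLinearMap, fB.toLinearMap, fC.toLinearMap] := by
    intro h
    have := h.fintype_card_le_finrank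
    rw [Subspace.dual_finrank_eq] at this
    simp [Module.finrank_fintype_fun_eq_card] at this
  obtain ⟨c, hsum, i₀, hi₀⟩ := Fintype.not_linearIndependent_iff.1 hdep
  have hsum' : ∀ x : Fin 2 → ℝ, c 0 * fA x + c 1 * fB x + c 2 * fC x = 0 := by
    intro x
    have := LinearMap.congr_fun hsum x
    simpa [Fin.sum_univ_three, smul_eq_mul] using this
  -- key sign lemma
  have key : ∀ c' : Fin 3 → ℝ,
      (∀ x : Fin 2 → ℝ, c' 0 * fA x + c' 1 * fB x + c' 2 * fC x = 0) →
      (∃ i, c' i ≠ 0) → c' 0 * aA + c' 1 * aB + c' 2 * aC < 0 := by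
    rintro c' hs ⟨i₀, hi₀⟩
    set i : Fin 2 := if 0 < c' 0 then 1 else 0 with hi
    set j : Fin 2 := if 0 < c' 1 then 1 else 0 with hj
    set k : Fin 2 := if 0 < c' 2 then 1 else 0 with hk
    set q := p i j k with hq
    have t0 : c' 0 * aA ≤ c' 0 * fA q ∧ (c' 0 ≠ 0 → c' 0 * aA < c' 0 * fA q) := by
      rcases lt_trichotomy (c' 0) 0 with h | h | h
      · have hi' : i = 0 := by rw [hi, if_neg (by linarith)]
        have hlt : fA q < aA := by rw [hq, hi']; exact (hfA j k).1
        exact ⟨(mul_lt_mul_of_neg_left hlt h).le, fun _ => mul_lt_mul_of_neg_left hlt h⟩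
      · simp [h]
      · have hi' : i = 1 := by rw [hi, if_pos h]
        have hlt : aA < fA q := by rw [hq, hi']; exact (hfA j k).2
        exact ⟨(mul_lt_mul_of_pos_left hlt h).le, fun _ => mul_lt_mul_of_pos_left hlt h⟩
    have t1 : c' 1 * aB ≤ c' 1 * fB q ∧ (c' 1 ≠ 0 → c' 1 * aB < c' 1 * fB q) := by
      rcases lt_trichotomy (c' 1) 0 with h | h | h
      · have hj' : j = 0 := by rw [hj, if_neg (by linarith)]
        have hlt : fB q < aB := by rw [hq, hj']; exact (hfB i k).1
        exact ⟨(mul_lt_mul_of_neg_left hlt h).le, fun _ => mul_lt_mul_of_neg_left hlt h⟩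
      · simp [h]
      · have hj' : j = 1 := by rw [hj, if_pos h]
        have hlt : aB < fB q := by rw [hq, hj']; exact (hfB i k).2
        exact ⟨(mul_lt_mul_of_pos_left hlt h).le, fun _ => mul_lt_mul_of_pos_left hlt h⟩
    have t2 : c' 2 * aC ≤ c' 2 * fC q ∧ (c' 2 ≠ 0 → c' 2 * aC < c' 2 * fC q) := by
      rcases lt_trichotomy (c' 2) 0 with h | h | h
      · have hk' : k = 0 := by rw [hk, if_neg (by linarith)]
        have hlt : fC q < aC := by rw [hq, hk']; exact (hfC i j).1
        exact ⟨(mul_lt_mul_of_neg_left hlt h).le, fun _ => mul_lt_mul_of_neg_left hlt h⟩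
      · simp [h]
      · have hk' : k = 1 := by rw [hk, if_pos h]
        have hlt : aC < fC q := by rw [hq, hk']; exact (hfC i j).2
        exact ⟨(mul_lt_mul_of_pos_left hlt h).le, fun _ => mul_lt_mul_of_pos_left hlt h⟩
    have hz := hs q
    fin_cases i₀
    · have := t0.2 hi₀; linarith [t1.1, t2.1]
    · have := t1.2 hi₀; linarith [t0.1, t2.1]
    · have := t2.2 hi₀; linarith [t0.1, t1.1]
  have h1 := key c hsum' ⟨i₀, hi₀⟩
  have h2 := key (fun i => -c i) (by intro x; have := hsum' x; linarith)
    ⟨i₀, by simpa using hi₀⟩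
  linarith
end

section
/- Let F_1 be a family of 3 convex sets and F_2 a family of 2 convex sets in R^2, such that C ∩ D ≠ ∅ for every C ∈ F_1 and D ∈ F_2. Then F_1 admits a line transversal (a line meeting all three sets of F_1), or the two sets of F_2 intersect. -/
/-- Three convex sets `F₁` and two convex sets `F₂` in the plane, every member
of `F₁` meeting every member of `F₂`: then `F₁` has a line transversal or the
two members of `F₂` intersect. -/
theorem stmt14 (F₁ : Fin 3 → Set (Fin 2 → ℝ)) (F₂ : Fin 2 → Set (Fin 2 → ℝ))
    (h₁ : ∀ i, Convex ℝ (F₁ i)) (h₂ : ∀ j, Convex ℝ (F₂ j))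
    (hcol : ∀ i j, (F₁ i ∩ F₂ j).Nonempty) :
    (∃ γ : AffineSubspace ℝ (Fin 2 → ℝ), Module.finrank ℝ γ.direction = 1 ∧
        ∀ i, ((γ : Set (Fin 2 → ℝ)) ∩ F₁ i).Nonempty) ∨
    (F₂ 0 ∩ F₂ 1).Nonempty := by
  classical
  choose p hp1 hp2 using hcol
  set A : Set (Fin 2 → ℝ) := convexHull ℝ (Set.range fun i => p i 0) with hA
  set B : Set (Fin 2 → ℝ) := convexHull ℝ (Set.range fun i => p i 1) with hB
  have hAsub : A ⊆ F₂ 0 := convexHull_min (by rintro _ ⟨i, rfl⟩; exact hp2 i 0) (h₂ 0)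
  have hBsub : B ⊆ F₂ 1 := convexHull_min (by rintro _ ⟨i, rfl⟩; exact hp2 i 1) (h₂ 1)
  by_cases hd : Disjoint A B
  · left
    have hAc : IsCompact A := (Set.finite_range _).isCompact_convexHull (𝕜 := ℝ)
    have hBc : IsCompact B := (Set.finite_range _).isCompact_convexHull (𝕜 := ℝ)
    obtain ⟨f, u, v, hu, huv, hv⟩ :=
      geometric_hahn_banach_compact_closed (convex_convexHull ℝ _) hAc
        (convex_convexHull ℝ _) hBc.isClosed hd
    -- f is nonzero
    have hpa : ∀ i, f (p i 0) < u := fun i => hu _ (subset_convexHull ℝ _ ⟨i, rfl⟩)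
    have hpb : ∀ i, v < f (p i 1) := fun i => hv _ (subset_convexHull ℝ _ ⟨i, rfl⟩)
    have hfne : (f : (Fin 2 → ℝ) →ₗ[ℝ] ℝ) ≠ 0 := by
      intro h
      have h0 : f (p 0 0) = 0 := by
        have := LinearMap.congr_fun h (p 0 0); simpa using this
      have h1 : f (p 0 1) = 0 := by
        have := LinearMap.congr_fun h (p 0 1); simpa using this
      have := (hpa 0).trans (huv.trans (hpb 0))
      rw [h0, h1] at this; exact lt_irrefl _ this
    -- find a point x₀ with f x₀ = u
    obtain ⟨x₀, hx₀⟩ : ∃ x₀, f x₀ = u := by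
      have hsurj : Function.Surjective (f : (Fin 2 → ℝ) →ₗ[ℝ] ℝ) :=
        LinearMap.surjective_of_ne_zero hfne
      exact hsurj u
    refine ⟨AffineSubspace.mk' x₀ (LinearMap.ker (f : (Fin 2 → ℝ) →ₗ[ℝ] ℝ)), ?_, ?_⟩
    · rw [AffineSubspace.direction_mk']
      have hr : Module.finrank ℝ (LinearMap.range (f : (Fin 2 → ℝ) →ₗ[ℝ] ℝ)) = 1 := by
        rw [LinearMap.range_eq_top.2 (LinearMap.surjective_of_ne_zero hfne)]
        simp
      have := LinearMap.finrank_range_add_finrank_ker (f : (Fin 2 → ℝ) →ₗ[ℝ] ℝ)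
      have hE : Module.finrank ℝ (Fin 2 → ℝ) = 2 := by simp
      omega
    · intro i
      -- IVT along the segment from p i 0 to p i 1
      set a := p i 0
      set b := p i 1
      have hg : Continuous fun t : ℝ => f ((1 - t) • a + t • b) := by fun_prop
      have hmem : u ∈ Set.Icc (f ((1 - (0:ℝ)) • a + (0:ℝ) • b))
          (f ((1 - (1:ℝ)) • a + (1:ℝ) • b)) := by
        simp only [sub_zero, one_smul, zero_smul, add_zero, sub_self, zero_add]
        exact ⟨(hpa i).le, (huv.trans (hpb i)).le⟩
      obtain ⟨t, ht, hft⟩ := intermediate_value_Icc (by norm_num : (0:ℝ) ≤ 1)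
        hg.continuousOn hmem
      refine ⟨(1 - t) • a + t • b, ?_, ?_⟩
      · rw [AffineSubspace.mem_coe, AffineSubspace.mem_mk',
          LinearMap.mem_ker]
        show (f : (Fin 2 → ℝ) →ₗ[ℝ] ℝ) ((1 - t) • a + t • b - x₀) = 0
        simp only [map_sub, ContinuousLinearMap.coe_coe]
        simp only [] at hft
        rw [hft, hx₀, sub_self]
      · exact h₁ i (hp1 i 0) (hp1 i 1) (by linarith [ht.2]) ht.1 (by ring)
  · right
    rw [Set.not_disjoint_iff] at hd
    obtain ⟨x, hxA, hxB⟩ := hd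
    exact ⟨x, hAsub hxA, hBsub hxB⟩
end

section
/- Let F_1, ..., F_n be families of convex sets in R^d satisfying the colorful intersection property with n = d. Then for every unit vector u ∈ R^d there exists an index i such that the members of F_i can all be intersected by a single line with direction u. -/
open Set Module

noncomputable instance (priority := 10000) lexLinOrd (n : ℕ) : LinearOrder (Lex (Fin n → ℝ)) :=
  @Pi.Lex.linearOrder (Fin n) (fun _ => ℝ) inferInstance
    (inferInstance : WellFoundedLT (Fin n)) inferInstance

/-- The strict lexicographic lower set is convex. -/
lemma lexlt_convex {n : ℕ} (c : Fin n → ℝ) :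
    Convex ℝ {x : Fin n → ℝ | toLex x < toLex c} := by
  intro x hx y hy a b ha hb hab
  rcases eq_or_lt_of_le ha with rfl | ha'
  · simpa [(by linarith : b = 1)] using hy
  rcases eq_or_lt_of_le hb with rfl | hb'
  · simpa [(by linarith : a = 1)] using hx
  obtain ⟨k1, h1, h1'⟩ := hx
  obtain ⟨k2, h2, h2'⟩ := hy
  replace h1 : ∀ j, j < k1 → x j = c j := h1
  replace h2 : ∀ j, j < k2 → y j = c j := h2
  replace h1' : x k1 < c k1 := h1'
  replace h2' : y k2 < c k2 := h2'
  have key : ∀ k : Fin n, x k ≤ c k → y k ≤ c k →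
      (x k < c k ∨ y k < c k) → a * x k + b * y k < c k := by
    intro k hxk hyk hor
    have : a * x k + b * y k < a * c k + b * c k := by
      rcases hor with h | h
      · exact add_lt_add_of_lt_of_le (by nlinarith) (by nlinarith)
      · exact add_lt_add_of_le_of_lt (by nlinarith) (by nlinarith)
    calc a * x k + b * y k < a * c k + b * c k := this
      _ = c k := by rw [← add_mul, hab, one_mul]
  rcases le_total k1 k2 with hk | hk
  · refine ⟨k1, fun j hj => ?_, ?_⟩
    · show a * x j + b * y j = c j
      have hj' : (j : Fin n) < k1 := hj
      rw [h1 j hj', h2 j (lt_of_lt_of_le hj' hk), ← add_mul, hab, one_mul]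
    · show a * x k1 + b * y k1 < c k1
      refine key k1 (le_of_lt h1') ?_ (Or.inl h1')
      rcases lt_or_eq_of_le hk with h | rfl
      · exact le_of_eq (h2 k1 h)
      · exact le_of_lt h2'
  · refine ⟨k2, fun j hj => ?_, ?_⟩
    · show a * x j + b * y j = c j
      have hj' : (j : Fin n) < k2 := hj
      rw [h1 j (lt_of_lt_of_le hj' hk), h2 j hj', ← add_mul, hab, one_mul]
    · show a * x k2 + b * y k2 < c k2
      refine key k2 ?_ (le_of_lt h2') (Or.inr h2')
      rcases lt_or_eq_of_le hk with h | rfl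
      · exact le_of_eq (h1 k2 h)
      · exact le_of_lt h1'

/-- A nonempty compact set in `Fin n → ℝ` has a lexicographically least element. -/
lemma exists_lexmin : ∀ (n : ℕ) (K : Set (Fin n → ℝ)), IsCompact K → K.Nonempty →
    ∃ y ∈ K, ∀ x ∈ K, toLex y ≤ toLex x := by
  intro n
  induction n with
  | zero =>
    intro K _ hne
    obtain ⟨y, hy⟩ := hne
    refine ⟨y, hy, fun x hx => le_of_eq ?_⟩
    congr 1
    ext j
    exact j.elim0
  | succ n ih =>
    intro K hK hne
    obtain ⟨z, hzK, hz⟩ := hK.exists_isMinOn hne (continuous_apply (0 : Fin (n+1))).continuousOn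
    set t := z 0 with ht
    set K' : Set (Fin (n+1) → ℝ) := K ∩ (fun x => x 0) ⁻¹' {t} with hK'
    have hK'c : IsCompact K' :=
      hK.inter_right (IsClosed.preimage (continuous_apply 0) isClosed_singleton)
    have hK'ne : K'.Nonempty := ⟨z, hzK, rfl⟩
    set T : (Fin (n+1) → ℝ) → (Fin n → ℝ) := fun x => x ∘ Fin.succ with hT
    have hTc : Continuous T := continuous_pi fun i => continuous_apply _
    obtain ⟨w, ⟨y, hyK', hyT⟩, hw⟩ := ih (T '' K') (hK'c.image hTc) (hK'ne.image T)
    have hy0 : y 0 = t := hyK'.2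
    refine ⟨y, hyK'.1, fun x hx => ?_⟩
    have hx0 : t ≤ x 0 := hz hx
    rcases lt_or_eq_of_le hx0 with h | h
    · refine le_of_lt ⟨0, fun j hj => absurd hj (by simp [Fin.not_lt_zero]), ?_⟩
      show y 0 < x 0
      rw [hy0]; exact h
    · have hxK' : x ∈ K' := ⟨hx, h.symm⟩
      have := hw (T x) ⟨x, hxK', rfl⟩
      rw [← hyT] at this
      rcases lt_or_eq_of_le this with hlt | heq
      · obtain ⟨k, hk, hk'⟩ := hlt
        replace hk : ∀ j, j < k → T y j = T x j := hk
        replace hk' : T y k < T x k := hk'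
        refine le_of_lt ⟨k.succ, fun j hj => ?_, hk'⟩
        have hj' : (j : Fin (n+1)) < k.succ := hj
        rcases Fin.eq_zero_or_eq_succ j with rfl | ⟨j', rfl⟩
        · show y 0 = x 0; rw [hy0, h]
        · exact hk j' (by rwa [Fin.succ_lt_succ_iff] at hj')
      · have hfun : T y = T x := toLex.injective heq
        refine le_of_eq ?_
        congr 1
        ext j
        rcases Fin.eq_zero_or_eq_succ j with rfl | ⟨j', rfl⟩
        · rw [hy0, h]
        · exact congrFun hfun j'
/-- Colorful Helly theorem: `m+1` finite families of convex sets in `ℝ^m` with the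
colorful intersection property; then some family has a common point. -/
lemma colorful_helly {m : ℕ} (s : Fin (m+1) → ℕ)
    (G : (i : Fin (m+1)) → Fin (s i) → Set (Fin m → ℝ))
    (hconv : ∀ i j, Convex ℝ (G i j))
    (hcol : ∀ C : (i : Fin (m+1)) → Fin (s i), (⋂ i, G i (C i)).Nonempty) :
    ∃ i, (⋂ j, G i j).Nonempty := by
  by_cases hs : ∃ i, s i = 0
  · obtain ⟨i, hsi⟩ := hs
    haveI : IsEmpty (Fin (s i)) := by rw [hsi]; infer_instance
    exact ⟨i, by rw [Set.iInter_of_empty]; exact ⟨0, Set.mem_univ 0⟩⟩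
  push_neg at hs
  haveI : ∀ i, Nonempty (Fin (s i)) := fun i => Fin.pos_iff_nonempty.1 (Nat.pos_of_ne_zero (hs i))
  haveI : Nonempty ((i : Fin (m+1)) → Fin (s i)) := ⟨fun i => Classical.arbitrary _⟩
  choose w hw using hcol
  set G' : (i : Fin (m+1)) → Fin (s i) → Set (Fin m → ℝ) :=
    fun i j => convexHull ℝ (w '' {C | C i = j}) with hG'
  have hsub : ∀ i j, G' i j ⊆ G i j := by
    intro i j
    refine convexHull_min ?_ (hconv i j)
    rintro _ ⟨C, hC, rfl⟩
    have := Set.mem_iInter.1 (hw C) i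
    rwa [hC] at this
  have hcpt : ∀ i j, IsCompact (G' i j) := fun i j =>
    ((Set.toFinite _).image w).isCompact_convexHull ℝ
  have hcv : ∀ i j, Convex ℝ (G' i j) := fun i j => convex_convexHull _ _
  have hmem : ∀ C i, w C ∈ G' i (C i) := fun C i =>
    subset_convexHull _ _ ⟨C, rfl, rfl⟩
  set K : ((i : Fin (m+1)) → Fin (s i)) → Set (Fin m → ℝ) :=
    fun C => ⋂ i, G' i (C i) with hKdef
  have hKc : ∀ C, IsCompact (K C) := fun C =>
    (hcpt 0 (C 0)).of_isClosed_subset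
      (isClosed_iInter fun i => (hcpt i (C i)).isClosed) (Set.iInter_subset _ 0)
  have hKne : ∀ C, (K C).Nonempty := fun C => ⟨w C, Set.mem_iInter.2 fun i => hmem C i⟩
  choose y hyK hymin using fun C => exists_lexmin m (K C) (hKc C) (hKne C)
  obtain ⟨Cs, -, hmax⟩ := Finset.exists_max_image Finset.univ (fun C => toLex (y C))
    ⟨Classical.arbitrary _, Finset.mem_univ _⟩
  by_contra hcon
  push_neg at hcon
  have hD : ∀ i, ∃ j, y Cs ∉ G' i j := by
    intro i
    by_contra hD'
    push_neg at hD'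
    exact Set.not_nonempty_iff_eq_empty.2 (hcon i) ⟨y Cs, Set.mem_iInter.2 fun j => hsub i j (hD' j)⟩
  choose D hD using hD
  set Ci : Fin (m+1) → ((i : Fin (m+1)) → Fin (s i)) :=
    fun i => Function.update Cs i (D i) with hCi
  have hyiD : ∀ i, y (Ci i) ∈ G' i (D i) := by
    intro i
    have h2 : y (Ci i) ∈ G' i (Function.update Cs i (D i) i) :=
      Set.mem_iInter.1 (hyK (Ci i)) i
    rwa [Function.update_self] at h2
  have hyik : ∀ i k, k ≠ i → y (Ci i) ∈ G' k (Cs k) := by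
    intro i k hk
    have h2 : y (Ci i) ∈ G' k (Function.update Cs i (D i) k) :=
      Set.mem_iInter.1 (hyK (Ci i)) k
    rwa [Function.update_of_ne hk] at h2
  have hlt : ∀ i, toLex (y (Ci i)) < toLex (y Cs) := by
    intro i
    refine lt_of_le_of_ne (hmax _ (Finset.mem_univ _)) ?_
    intro h
    exact hD i (by rw [← toLex.injective h]; exact hyiD i)
  -- the m+2 points
  set f : Fin (m+2) → (Fin m → ℝ) := Fin.cases (y Cs) (fun i => y (Ci i)) with hf
  have hdep : ¬ AffineIndependent ℝ f := by
    intro h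
    have h1 := h.card_le_finrank_succ
    have h2 := (vectorSpan ℝ (Set.range f)).finrank_le
    rw [Fintype.card_fin] at h1
    rw [Module.finrank_fintype_fun_eq_card, Fintype.card_fin] at h2
    omega
  obtain ⟨I, z, hzI, hzIc⟩ := Convex.radon_partition hdep
  -- membership of each f idx in the color classes
  have hfmem : ∀ (idx : Fin (m+2)) (k : Fin (m+1)), idx ≠ k.succ → f idx ∈ G' k (Cs k) := by
    intro idx k hidx
    rcases Fin.eq_zero_or_eq_succ idx with rfl | ⟨i', rfl⟩
    · show y Cs ∈ G' k (Cs k)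
      exact Set.mem_iInter.1 (hyK Cs) k
    · have : i' ≠ k := fun h => hidx (by rw [h])
      show y (Ci i') ∈ G' k (Cs k)
      exact hyik i' k (Ne.symm this)
  have hzK : z ∈ K Cs := by
    refine Set.mem_iInter.2 fun k => ?_
    by_cases hkI : (k.succ : Fin (m+2)) ∈ I
    · refine convexHull_min ?_ (hcv k (Cs k)) hzIc
      rintro _ ⟨idx, hidx, rfl⟩
      exact hfmem idx k (fun h => hidx (h ▸ hkI))
    · refine convexHull_min ?_ (hcv k (Cs k)) hzI
      rintro _ ⟨idx, hidx, rfl⟩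
      exact hfmem idx k (fun h => hkI (h ▸ hidx))
  have hflt : ∀ (idx : Fin (m+2)), idx ≠ 0 → toLex (f idx) < toLex (y Cs) := by
    intro idx hidx
    rcases Fin.eq_zero_or_eq_succ idx with rfl | ⟨i', rfl⟩
    · exact absurd rfl hidx
    · exact hlt i'
  have hzlt : toLex z < toLex (y Cs) := by
    by_cases h0 : (0 : Fin (m+2)) ∈ I
    · have : convexHull ℝ (f '' Iᶜ) ⊆ {x | toLex x < toLex (y Cs)} := by
        refine convexHull_min ?_ (lexlt_convex _)
        rintro _ ⟨idx, hidx, rfl⟩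
        exact hflt idx (fun h => hidx (h ▸ h0))
      exact this hzIc
    · have : convexHull ℝ (f '' I) ⊆ {x | toLex x < toLex (y Cs)} := by
        refine convexHull_min ?_ (lexlt_convex _)
        rintro _ ⟨idx, hidx, rfl⟩
        exact hflt idx (fun h => h0 (h ▸ hidx))
      exact this hzI
  exact absurd (hymin Cs z hzK) (not_le.2 hzlt)

/-- `d` families of convex sets in `ℝ^d` (each finite) with the colorful
intersection property: for every unit direction `u` some family can be met by a
single line in direction `u`. -/
theorem stmt15 (d : ℕ) (s : Fin d → ℕ)
    (F : (i : Fin d) → Fin (s i) → Set (EuclideanSpace ℝ (Fin d)))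
    (hconv : ∀ i j, Convex ℝ (F i j))
    (hcol : ∀ C : (i : Fin d) → Fin (s i), (⋂ i, F i (C i)).Nonempty)
    (u : EuclideanSpace ℝ (Fin d)) (hu : ‖u‖ = 1) :
    ∃ i : Fin d, ∃ p : EuclideanSpace ℝ (Fin d),
      ∀ j, ∃ t : ℝ, p + t • u ∈ F i j := by
  cases d with
  | zero =>
    exfalso
    rw [EuclideanSpace.norm_eq] at hu
    simp at hu
  | succ m =>
    have hu0 : u ≠ 0 := by intro h; rw [h, norm_zero] at hu; norm_num at hu
    haveI : Fact (finrank ℝ (EuclideanSpace ℝ (Fin (m+1))) = m + 1) :=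
      ⟨finrank_euclideanSpace_fin⟩
    set V : Submodule ℝ (EuclideanSpace ℝ (Fin (m+1))) := (ℝ ∙ u)ᗮ with hV
    set b : OrthonormalBasis (Fin m) ℝ V :=
      OrthonormalBasis.fromOrthogonalSpanSingleton m hu0 with hb
    set π : EuclideanSpace ℝ (Fin (m+1)) →ₗ[ℝ] (Fin m → ℝ) :=
      (WithLp.linearEquiv 2 ℝ (Fin m → ℝ)).toLinearMap ∘ₗ
        b.repr.toLinearEquiv.toLinearMap ∘ₗ (V.orthogonalProjectionOnto).toLinearMap with hπ
    have hker : ∀ x : EuclideanSpace ℝ (Fin (m+1)), π x = 0 → ∃ t : ℝ, t • u = x := by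
      intro x hx
      have hx' : (WithLp.linearEquiv 2 ℝ (Fin m → ℝ)) (b.repr ((V.orthogonalProjectionOnto) x)) = 0 := hx
      have h1 : b.repr ((V.orthogonalProjectionOnto) x) = 0 :=
        (LinearEquiv.map_eq_zero_iff _).mp hx'
      have h2 : (V.orthogonalProjectionOnto) x = 0 :=
        (LinearIsometryEquiv.map_eq_zero_iff _).mp h1
      have h3 : x ∈ Vᗮ := Submodule.orthogonalProjectionOnto_eq_zero_iff.mp h2
      rw [hV, Submodule.orthogonal_orthogonal] at h3
      exact Submodule.mem_span_singleton.mp h3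
    set G : (i : Fin (m+1)) → Fin (s i) → Set (Fin m → ℝ) :=
      fun i j => ⇑π '' (F i j) with hG
    obtain ⟨i, p', hp'⟩ := colorful_helly s G
      (fun i j => (hconv i j).linear_image π)
      (fun C => by
        obtain ⟨x, hx⟩ := hcol C
        exact ⟨π x, Set.mem_iInter.2 fun i => ⟨x, Set.mem_iInter.1 hx i, rfl⟩⟩)
    rcases Nat.eq_zero_or_pos (s i) with hsi | hsi
    · haveI : IsEmpty (Fin (s i)) := by rw [hsi]; infer_instance
      exact ⟨i, 0, fun j => isEmptyElim j⟩
    · obtain ⟨x0, hx0, hx0'⟩ := Set.mem_iInter.1 hp' ⟨0, hsi⟩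
      refine ⟨i, x0, fun j => ?_⟩
      obtain ⟨x, hx, hxe⟩ := Set.mem_iInter.1 hp' j
      have hker' : π (x - x0) = 0 := by rw [map_sub, hxe, hx0', sub_self]
      obtain ⟨t, ht⟩ := hker (x - x0) hker'
      exact ⟨t, by rw [ht]; rwa [add_sub_cancel]⟩
end
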